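/- The generalized 3-connectivity of the bubble-sort star graph BS_3 equals 2, i.e., κ₃(BS_3) = 2. -/

import Mathlib

/-- There exist `r` internally disjoint trees connecting `S` in `G`: `r` pairwise
edge-disjoint trees `T₁, …, T_r` of `G`, each containing `S`, with
`V(T_a) ∩ V(T_b) = S` for all `a ≠ b`. -/
def ConnectsSet {V : Type*} (G : SimpleGraph V) (S : Set V) (r : ℕ) : Prop :=
  ∃ T : Fin r → G.Subgraph,
    (∀ a, (T a).coe.IsTree) ∧
    (∀ a, S ⊆ (T a).verts) ∧
    (∀ a b, a ≠ b → (T a).verts ∩ (T b).verts = S) ∧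
    (∀ a b, a ≠ b → Disjoint (T a).edgeSet (T b).edgeSet)

/-- `κ_G(S)`: the maximum number of internally disjoint trees connecting `S` in `G`. -/
noncomputable def treeConn {V : Type*} (G : SimpleGraph V) (S : Set V) : ℕ :=
  sSup {r | ConnectsSet G S r}

/-- The generalized 3-connectivity `κ₃(G) = min {κ_G(S) : S ⊆ V(G), |S| = 3}`. -/
noncomputable def kappa3 {V : Type*} (G : SimpleGraph V) : ℕ :=
  sInf {k | ∃ S : Set V, S.ncard = 3 ∧ treeConn G S = k}

/-- The Cayley graph of a group with connection set `S`: `x` is adjacent to `x·s` for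
`s ∈ S` (symmetrized, loops removed). -/
def cayleyGraph {G : Type*} [Group G] (S : Set G) : SimpleGraph G :=
  SimpleGraph.fromRel (fun x y => ∃ s ∈ S, y = x * s)

/-- The bubble-sort star graph `BS_n`: the Cayley graph of `Sym(n)` (permutations of the
`n` positions `0, …, n-1`, written as words) with connection set
`{(1 i) : 2 ≤ i ≤ n} ∪ {(i, i+1) : 2 ≤ i ≤ n-1}` (in 1-based notation). -/
def bubbleSortStar (n : ℕ) (hn : 3 ≤ n) : SimpleGraph (Equiv.Perm (Fin n)) :=
  cayleyGraph ({σ | ∃ i : Fin n, 1 ≤ (i : ℕ) ∧ σ = Equiv.swap ⟨0, by omega⟩ i} ∪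
    {σ | ∃ j : ℕ, ∃ h : j + 1 < n, 1 ≤ j ∧ σ = Equiv.swap ⟨j, by omega⟩ ⟨j + 1, h⟩})


open SimpleGraph

section Generic


variable {V : Type*} [DecidableEq V] {G : SimpleGraph V}

lemma last_edge {K : SimpleGraph V} {u v : V} (p : K.Walk u v) (hp : ¬ p.Nil) :
    ∃ w, K.Adj v w ∧ s(v, w) ∈ p.edges := by
  have hrev : ¬ p.reverse.Nil := by
    rw [Walk.nil_iff_length_eq] at hp ⊢
    simpa using hp
  obtain ⟨w, h, q, hq⟩ := Walk.not_nil_iff.mp hrev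
  refine ⟨w, h, ?_⟩
  have : s(v, w) ∈ p.reverse.edges := by rw [hq]; simp
  simpa using this

lemma exists_adj_of_mem {H : G.Subgraph} (hc : H.Connected) {u v : V}
    (hu : u ∈ H.verts) (hv : v ∈ H.verts) (hne : u ≠ v) : ∃ z, H.Adj u z := by
  obtain ⟨p⟩ := hc.preconnected.coe ⟨u, hu⟩ ⟨v, hv⟩
  have hnp : ¬ p.Nil := Walk.not_nil_of_ne (by simp [Subtype.ext_iff]; exact hne)
  obtain ⟨w, h, q, _⟩ := Walk.not_nil_iff.mp hnp
  exact ⟨w, h⟩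

lemma coe_acyclic_of_spanningCoe {H : G.Subgraph} (h : H.spanningCoe.IsAcyclic) :
    H.coe.IsAcyclic := by
  intro v c hc
  let f : H.coe →g H.spanningCoe := ⟨fun a => a.1, fun {a b} hab => hab⟩
  exact h (c.map f) (hc.map Subtype.val_injective)

lemma isAcyclic_sup_edge {A B : SimpleGraph V} (hA : A.IsAcyclic) {x y : V} (hxy : x ≠ y)
    (hx : ∀ z, ¬ A.Adj x z)
    (hB : ∀ u v, B.Adj u v ↔ (u = x ∧ v = y) ∨ (u = y ∧ v = x)) :
    (A ⊔ B).IsAcyclic := by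
  intro u c hc
  have hz : ∀ w, (A ⊔ B).Adj x w → w = y := by
    intro w hw
    rcases hw with hw | hw
    · exact absurd hw (hx w)
    · rcases (hB _ _).mp hw with ⟨_, h⟩ | ⟨h, _⟩
      · exact h
      · exact absurd h hxy
  by_cases hmem : x ∈ c.support
  · have hc' := hc.rotate hmem
    obtain ⟨z, hadj, p, hp⟩ := Walk.not_nil_iff.mp hc'.not_nil
    have hzy : z = y := hz z hadj
    rw [hp, Walk.cons_isCycle_iff] at hc'
    have hnp : ¬ p.Nil := Walk.not_nil_of_ne (by rw [hzy]; exact fun h => hxy h.symm)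
    obtain ⟨w, hadj2, hmem2⟩ := last_edge p hnp
    have hwy : w = y := hz w hadj2
    apply hc'.2
    have : s(x, z) = s(x, w) := by rw [hzy, hwy]
    rw [this]
    exact hmem2
  · have hedges : ∀ e ∈ c.edges, e ∈ A.edgeSet := by
      intro e he
      have h1 := c.edges_subset_edgeSet he
      revert h1 he
      refine e.ind (fun a b => ?_)
      intro he h1
      rcases h1 with h1 | h1
      · exact h1
      · exfalso
        rcases (hB _ _).mp h1 with ⟨rfl, _⟩ | ⟨_, rfl⟩
        · exact hmem (Walk.fst_mem_support_of_mem_edges c he)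
        · exact hmem (Walk.snd_mem_support_of_mem_edges c he)
    exact hA (c.transfer A hedges) (hc.transfer hedges)

lemma bot_isAcyclic : (⊥ : SimpleGraph V).IsAcyclic := by
  intro v c hc
  exact hc.ne_bot rfl

/-- "Good" subgraphs: connected with acyclic spanning coercion. -/
def Good (H : G.Subgraph) : Prop := H.Connected ∧ H.spanningCoe.IsAcyclic

lemma Good.isTree {H : G.Subgraph} (h : Good H) : H.coe.IsTree :=
  ⟨h.1.coe, coe_acyclic_of_spanningCoe h.2⟩

lemma good_single {x y : V} (a : G.Adj x y) : Good (G.subgraphOfAdj a) := by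
  refine ⟨Subgraph.subgraphOfAdj_connected a, ?_⟩
  have : (G.subgraphOfAdj a).spanningCoe = ⊥ ⊔ (G.subgraphOfAdj a).spanningCoe := by
    rw [bot_sup_eq]
  rw [this]
  refine isAcyclic_sup_edge bot_isAcyclic a.ne (fun z h => h.elim) (fun u v => ?_)
  constructor
  · intro h
    simp only [Subgraph.spanningCoe, subgraphOfAdj_adj] at h
    rcases Sym2.eq_iff.mp h with ⟨rfl, rfl⟩ | ⟨rfl, rfl⟩
    · exact Or.inl ⟨rfl, rfl⟩
    · exact Or.inr ⟨rfl, rfl⟩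
  · rintro (⟨rfl, rfl⟩ | ⟨rfl, rfl⟩) <;> simp [Subgraph.spanningCoe, Sym2.eq_iff]

lemma good_pendant {H : G.Subgraph} (hH : Good H) {x y : V}
    (hy : y ∈ H.verts) (hx : x ∉ H.verts) (a : G.Adj y x) :
    Good (H ⊔ G.subgraphOfAdj a) := by
  constructor
  · refine Subgraph.connected_sup hH.1.preconnected (Subgraph.subgraphOfAdj_connected a).preconnected ⟨y, ?_⟩
    constructor
    · exact hy
    · simp
  · have hsp : (H ⊔ G.subgraphOfAdj a).spanningCoe
        = H.spanningCoe ⊔ (G.subgraphOfAdj a).spanningCoe := by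
      ext u v
      simp [Subgraph.spanningCoe, Subgraph.sup_adj]
    rw [hsp]
    refine isAcyclic_sup_edge hH.2 (fun h : x = y => hx (h ▸ hy)) ?_ (fun u v => ?_)
    · intro z hz
      exact hx hz.fst_mem
    · constructor
      · intro h
        simp only [Subgraph.spanningCoe, subgraphOfAdj_adj] at h
        rcases Sym2.eq_iff.mp h with ⟨rfl, rfl⟩ | ⟨rfl, rfl⟩
        · exact Or.inr ⟨rfl, rfl⟩
        · exact Or.inl ⟨rfl, rfl⟩
      · rintro (⟨rfl, rfl⟩ | ⟨rfl, rfl⟩) <;> simp [Subgraph.spanningCoe, Sym2.eq_iff]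

lemma fin2_cases : ∀ i j : Fin 2, i ≠ j → (i = 0 ∧ j = 1) ∨ (i = 1 ∧ j = 0) := by decide

lemma inter_insert {S : Set V} {v w : V} (hvw : v ≠ w) (hv : v ∉ S) (hw : w ∉ S) :
    (insert v S) ∩ (insert w S) = S := by
  ext u
  simp only [Set.mem_inter_iff, Set.mem_insert_iff]
  constructor
  · rintro ⟨rfl | h1, h2⟩
    · rcases h2 with rfl | h2
      · exact absurd rfl hvw
      · exact absurd h2 hv
    · exact h1
  · intro h
    exact ⟨Or.inr h, Or.inr h⟩

lemma sym2_ne {v w x y : V} (hvw : v ≠ w) (hvy : v ≠ y) : s(v, x) ≠ s(w, y) := by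
  intro h
  rcases Sym2.eq_iff.mp h with ⟨h1, _⟩ | ⟨h1, _⟩
  · exact hvw h1
  · exact hvy h1

section Star

variable {a b c v w : V}

/-- The star with center `v` and leaves `a, b, c`. -/
def star3 (h1 : G.Adj v a) (h2 : G.Adj v b) (h3 : G.Adj v c) : G.Subgraph :=
  (G.subgraphOfAdj h1 ⊔ G.subgraphOfAdj h2) ⊔ G.subgraphOfAdj h3

lemma star3_verts (h1 : G.Adj v a) (h2 : G.Adj v b) (h3 : G.Adj v c) :
    (star3 h1 h2 h3).verts = insert v {a, b, c} := by
  ext u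
  simp only [star3, Subgraph.verts_sup, subgraphOfAdj_verts, Set.mem_union,
    Set.mem_insert_iff, Set.mem_singleton_iff]
  tauto

lemma star3_edgeSet (h1 : G.Adj v a) (h2 : G.Adj v b) (h3 : G.Adj v c) :
    (star3 h1 h2 h3).edgeSet = {s(v, a), s(v, b), s(v, c)} := by
  ext e
  simp only [star3, Subgraph.edgeSet_sup, edgeSet_subgraphOfAdj, Set.mem_union,
    Set.mem_insert_iff, Set.mem_singleton_iff]
  tauto

lemma star3_good (h1 : G.Adj v a) (h2 : G.Adj v b) (h3 : G.Adj v c)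
    (hab : a ≠ b) (hac : a ≠ c) (hbc : b ≠ c) : Good (star3 h1 h2 h3) := by
  have g1 : Good (G.subgraphOfAdj h1 ⊔ G.subgraphOfAdj h2) := by
    refine good_pendant (good_single h1) ?_ ?_ h2
    · simp
    · simp only [subgraphOfAdj_verts, Set.mem_insert_iff, Set.mem_singleton_iff]
      push_neg
      exact ⟨h2.ne', hab.symm⟩
  refine good_pendant g1 ?_ ?_ h3
  · simp only [Subgraph.verts_sup, subgraphOfAdj_verts, Set.mem_union]
    left; simp
  · simp only [Subgraph.verts_sup, subgraphOfAdj_verts, Set.mem_union,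
      Set.mem_insert_iff, Set.mem_singleton_iff]
    push_neg
    exact ⟨⟨h3.ne', hac.symm⟩, h3.ne', hbc.symm⟩

/-- Two disjoint stars give 2 trees connecting `{a,b,c}`. -/
lemma connectsSet_two_same (h1 : G.Adj v a) (h2 : G.Adj v b) (h3 : G.Adj v c)
    (k1 : G.Adj w a) (k2 : G.Adj w b) (k3 : G.Adj w c)
    (hab : a ≠ b) (hac : a ≠ c) (hbc : b ≠ c) (hvw : v ≠ w) :
    ConnectsSet G {a, b, c} 2 := by
  have hvS : v ∉ ({a, b, c} : Set V) := by
    simp only [Set.mem_insert_iff, Set.mem_singleton_iff]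
    push_neg
    exact ⟨h1.ne, h2.ne, h3.ne⟩
  have hwS : w ∉ ({a, b, c} : Set V) := by
    simp only [Set.mem_insert_iff, Set.mem_singleton_iff]
    push_neg
    exact ⟨k1.ne, k2.ne, k3.ne⟩
  have key : (star3 h1 h2 h3).verts ∩ (star3 k1 k2 k3).verts = {a, b, c} := by
    rw [star3_verts, star3_verts]
    exact inter_insert hvw hvS hwS
  have keyE : Disjoint (star3 h1 h2 h3).edgeSet (star3 k1 k2 k3).edgeSet := by
    rw [star3_edgeSet, star3_edgeSet, Set.disjoint_left]
    intro e he1 he2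
    simp only [Set.mem_insert_iff, Set.mem_singleton_iff] at he1 he2
    rcases he1 with rfl | rfl | rfl <;> rcases he2 with h | h | h <;>
      first
        | exact sym2_ne hvw h1.ne h
        | exact sym2_ne hvw h2.ne h
        | exact sym2_ne hvw h3.ne h
  have h10 : (1 : Fin 2) ≠ 0 := by decide
  set T0 := star3 h1 h2 h3 with hT0
  set T1 := star3 k1 k2 k3 with hT1
  have e0 : ∀ i : Fin 2, i = 0 → (if i = 0 then T0 else T1) = T0 := fun i hi => if_pos hi
  have e1 : ∀ i : Fin 2, i ≠ 0 → (if i = 0 then T0 else T1) = T1 := fun i hi => if_neg hi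
  refine ⟨fun i => if i = 0 then T0 else T1, ?_, ?_, ?_, ?_⟩
  · intro i
    by_cases hi : i = 0
    · beta_reduce
      rw [e0 i hi]
      exact (star3_good h1 h2 h3 hab hac hbc).isTree
    · beta_reduce
      rw [e1 i hi]
      exact (star3_good k1 k2 k3 hab hac hbc).isTree
  · intro i
    by_cases hi : i = 0
    · beta_reduce
      rw [e0 i hi, hT0, star3_verts]
      exact Set.subset_insert _ _
    · beta_reduce
      rw [e1 i hi, hT1, star3_verts]
      exact Set.subset_insert _ _
  · intro i j hij
    rcases fin2_cases i j hij with ⟨rfl, rfl⟩ | ⟨rfl, rfl⟩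
    · beta_reduce
      rw [e0 0 rfl, e1 1 h10]
      exact key
    · beta_reduce
      rw [e0 0 rfl, e1 1 h10, Set.inter_comm]
      exact key
  · intro i j hij
    rcases fin2_cases i j hij with ⟨rfl, rfl⟩ | ⟨rfl, rfl⟩
    · beta_reduce
      rw [e0 0 rfl, e1 1 h10]
      exact keyE
    · beta_reduce
      rw [e0 0 rfl, e1 1 h10]
      exact keyE.symm
end Star

section Mixed

variable {a b c v w : V}

/-- Path `a - v - b` together with spider `v - c - ⟨w: a,b⟩` give two trees connecting
`{a, b, v}`. -/
lemma connectsSet_two_mixed (hva : G.Adj v a) (hvb : G.Adj v b) (hvc : G.Adj v c)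
    (hwa : G.Adj w a) (hwb : G.Adj w b) (hwc : G.Adj w c)
    (hab : a ≠ b) (hac : a ≠ c) (hbc : b ≠ c) (hvw : v ≠ w) :
    ConnectsSet G {a, b, v} 2 := by
  set T0 : G.Subgraph := G.subgraphOfAdj hva ⊔ G.subgraphOfAdj hvb with hT0def
  set T1 : G.Subgraph := star3 hwa hwb hwc ⊔ G.subgraphOfAdj hvc.symm with hT1def
  have hT0good : Good T0 := by
    refine good_pendant (good_single hva) ?_ ?_ hvb
    · simp
    · simp only [subgraphOfAdj_verts, Set.mem_insert_iff, Set.mem_singleton_iff]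
      push_neg
      exact ⟨hvb.ne', hab.symm⟩
  have hT1good : Good T1 := by
    refine good_pendant (star3_good hwa hwb hwc hab hac hbc) ?_ ?_ hvc.symm
    · rw [star3_verts]
      simp
    · rw [star3_verts]
      simp only [Set.mem_insert_iff, Set.mem_singleton_iff]
      push_neg
      exact ⟨hvw, hva.ne, hvb.ne, hvc.ne⟩
  have hT0v : T0.verts = {a, b, v} := by
    rw [hT0def]
    simp only [Subgraph.verts_sup, subgraphOfAdj_verts]
    ext u
    simp only [Set.mem_union, Set.mem_insert_iff, Set.mem_singleton_iff]
    tauto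
  have hT1v : T1.verts = insert v (insert w {a, b, c}) := by
    rw [hT1def]
    rw [Subgraph.verts_sup, star3_verts]
    ext u
    simp only [Set.mem_union, subgraphOfAdj_verts, Set.mem_insert_iff, Set.mem_singleton_iff]
    tauto
  have hST1 : ({a, b, v} : Set V) ⊆ T1.verts := by
    rw [hT1v]
    intro u hu
    simp only [Set.mem_insert_iff, Set.mem_singleton_iff] at hu ⊢
    tauto
  have key : T0.verts ∩ T1.verts = {a, b, v} := by
    rw [hT0v]
    exact Set.inter_eq_left.mpr (hT0v ▸ hST1)
  have hT0e : T0.edgeSet = {s(v, a), s(v, b)} := by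
    rw [hT0def, Subgraph.edgeSet_sup, edgeSet_subgraphOfAdj, edgeSet_subgraphOfAdj]
    ext e
    simp only [Set.mem_union, Set.mem_insert_iff, Set.mem_singleton_iff]
    try tauto
  have hT1e : T1.edgeSet = {s(w, a), s(w, b), s(w, c), s(c, v)} := by
    rw [hT1def, Subgraph.edgeSet_sup, star3_edgeSet, edgeSet_subgraphOfAdj]
    ext e
    simp only [Set.mem_union, Set.mem_insert_iff, Set.mem_singleton_iff]
    try tauto
  have keyE : Disjoint T0.edgeSet T1.edgeSet := by
    rw [hT0e, hT1e, Set.disjoint_left]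
    intro e he1 he2
    simp only [Set.mem_insert_iff, Set.mem_singleton_iff] at he1 he2
    rcases he1 with rfl | rfl <;> rcases he2 with h | h | h | h <;>
      rcases Sym2.eq_iff.mp h with ⟨h1, h2⟩ | ⟨h1, h2⟩ <;>
      first
        | exact hvw h1
        | exact hva.ne h1
        | exact hvb.ne h1
        | exact hvc.ne h1
        | exact hac h2
        | exact hbc h2
  have h10 : (1 : Fin 2) ≠ 0 := by decide
  have e0 : ∀ i : Fin 2, i = 0 → (if i = 0 then T0 else T1) = T0 := fun i hi => if_pos hi
  have e1 : ∀ i : Fin 2, i ≠ 0 → (if i = 0 then T0 else T1) = T1 := fun i hi => if_neg hi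
  refine ⟨fun i => if i = 0 then T0 else T1, ?_, ?_, ?_, ?_⟩
  · intro i
    by_cases hi : i = 0
    · beta_reduce
      rw [e0 i hi]
      exact hT0good.isTree
    · beta_reduce
      rw [e1 i hi]
      exact hT1good.isTree
  · intro i
    by_cases hi : i = 0
    · beta_reduce
      rw [e0 i hi, hT0v]
    · beta_reduce
      rw [e1 i hi]
      exact hST1
  · intro i j hij
    rcases fin2_cases i j hij with ⟨rfl, rfl⟩ | ⟨rfl, rfl⟩
    · beta_reduce
      rw [e0 0 rfl, e1 1 h10]
      exact key
    · beta_reduce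
      rw [e0 0 rfl, e1 1 h10, Set.inter_comm]
      exact key
  · intro i j hij
    rcases fin2_cases i j hij with ⟨rfl, rfl⟩ | ⟨rfl, rfl⟩
    · beta_reduce
      rw [e0 0 rfl, e1 1 h10]
      exact keyE
    · beta_reduce
      rw [e0 0 rfl, e1 1 h10]
      exact keyE.symm

end Mixed


end Generic

section BS3sec

open Equiv Equiv.Perm

abbrev P3 := Equiv.Perm (Fin 3)

def pt1 : P3 := Equiv.swap 0 1
def pt2 : P3 := Equiv.swap 0 2
def pt3 : P3 := Equiv.swap 1 2
def pe0 : P3 := 1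
def pe1 : P3 := Equiv.swap 0 1 * Equiv.swap 1 2
def pe2 : P3 := Equiv.swap 1 2 * Equiv.swap 0 1

lemma cs_eq : ({σ | ∃ i : Fin 3, 1 ≤ (i : ℕ) ∧ σ = Equiv.swap ⟨0, by omega⟩ i} ∪
    {σ | ∃ j : ℕ, ∃ h : j + 1 < 3, 1 ≤ j ∧ σ = Equiv.swap ⟨j, by omega⟩ ⟨j + 1, h⟩} : Set P3)
    = {pt1, pt2, pt3} := by
  ext σ
  constructor
  · rintro (⟨i, hi, rfl⟩ | ⟨j, hj, hj1, rfl⟩)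
    · fin_cases i
      · simp at hi
      · left; rfl
      · right; left; rfl
    · have : j = 1 := by omega
      subst this
      right; right; rfl
  · rintro (rfl | rfl | rfl)
    · exact Or.inl ⟨1, by norm_num, rfl⟩
    · exact Or.inl ⟨2, by norm_num, rfl⟩
    · exact Or.inr ⟨1, by omega, by norm_num, rfl⟩

lemma adj_iff {x y : P3} :
    (bubbleSortStar 3 (le_refl 3)).Adj x y ↔ Perm.sign x ≠ Perm.sign y := by
  rw [bubbleSortStar, cayleyGraph, fromRel_adj, cs_eq]
  simp only [Set.mem_insert_iff, Set.mem_singleton_iff]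
  revert x y
  decide

/-- The six elements of `P3`. -/
lemma dec6 : ∀ u : P3, u = pe0 ∨ u = pe1 ∨ u = pe2 ∨ u = pt1 ∨ u = pt2 ∨ u = pt3 := by decide

local notation "BS3" => bubbleSortStar 3 (le_refl 3)

lemma dec_third : ∀ x y : P3, x ≠ y → Perm.sign x = Perm.sign y →
    ∃ z, Perm.sign z = Perm.sign x ∧ z ≠ x ∧ z ≠ y := by decide

lemma dec_partner : ∀ v : P3, ∃ w, w ≠ v ∧ Perm.sign w = Perm.sign v := by decide

lemma dec_opp : ∀ a : P3, ∃ v w : P3, v ≠ w ∧ Perm.sign v ≠ Perm.sign a ∧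
    Perm.sign w ≠ Perm.sign a := by decide

lemma units_trich : ∀ sa sb sc : ℤˣ, sa ≠ sb → sa ≠ sc → sb = sc := by decide

/-- Lower bound: every 3-set is connected by two internally disjoint trees. -/
lemma lower_bound {S : Set P3} (hS : S.ncard = 3) : ConnectsSet BS3 S 2 := by
  obtain ⟨a, b, c, hab, hac, hbc, rfl⟩ := Set.ncard_eq_three.mp hS
  have mixed : ∀ x y v : P3, x ≠ y → Perm.sign x = Perm.sign y →
      Perm.sign v ≠ Perm.sign x → ConnectsSet BS3 {x, y, v} 2 := by
    intro x y v hxy hsxy hsv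
    obtain ⟨z, hzx, hzs, hzy⟩ := dec_third x y hxy hsxy
    obtain ⟨w, hwv, hws⟩ := dec_partner v
    refine connectsSet_two_mixed (a := x) (b := y) (c := z) (v := v) (w := w)
      (adj_iff.mpr hsv) (adj_iff.mpr (hsxy ▸ hsv)) (adj_iff.mpr (hzx ▸ hsv))
      (adj_iff.mpr (fun h => hsv ((hws.symm.trans h)))) 
      (adj_iff.mpr (fun h => hsv ((hws.symm.trans h).trans hsxy.symm)))
      (adj_iff.mpr (fun h => hsv ((hws.symm.trans h).trans hzx)))
      hxy hzs.symm hzy.symm (fun h => hwv h.symm)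
  by_cases hsab : Perm.sign a = Perm.sign b
  · by_cases hsac : Perm.sign a = Perm.sign c
    · -- all on one side: two stars
      obtain ⟨v, w, hvw, hsv, hsw⟩ := dec_opp a
      exact connectsSet_two_same
        (adj_iff.mpr hsv) (adj_iff.mpr (hsab ▸ hsv)) (adj_iff.mpr (hsac ▸ hsv))
        (adj_iff.mpr hsw) (adj_iff.mpr (hsab ▸ hsw)) (adj_iff.mpr (hsac ▸ hsw))
        hab hac hbc hvw
    · exact mixed a b c hab hsab (fun h => hsac h.symm)
  · by_cases hsac : Perm.sign a = Perm.sign c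
    · have hset : ({a, c, b} : Set P3) = {a, b, c} := by
        ext u; simp only [Set.mem_insert_iff, Set.mem_singleton_iff]; tauto
      exact hset ▸ mixed a c b hac hsac (fun h => hsab h.symm)
    · have hsbc : Perm.sign b = Perm.sign c := by
        generalize Perm.sign a = sa at hsab hsac
        generalize Perm.sign b = sb at *
        generalize Perm.sign c = sc at *
        revert hsab hsac; revert sa sb sc; decide
      have hset : ({b, c, a} : Set P3) = {a, b, c} := by
        ext u; simp only [Set.mem_insert_iff, Set.mem_singleton_iff]; tauto
      exact hset ▸ mixed b c a hbc hsbc hsab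

def S0 : Set P3 := {pe0, pe1, pt1}

lemma S0_ncard : S0.ncard = 3 :=
  Set.ncard_eq_three.mpr ⟨pe0, pe1, pt1, by decide, by decide, by decide, rfl⟩

lemma mem_S0_iff {u : P3} : u ∈ S0 ↔ u = pe0 ∨ u = pe1 ∨ u = pt1 := by
  simp [S0, Set.mem_insert_iff]

/-- Upper bound at `S0`. -/
lemma upper_bound {r : ℕ} (h : ConnectsSet BS3 S0 r) : r ≤ 2 := by
  by_contra hr
  push_neg at hr
  obtain ⟨T, htree, hsub, hint, hdisj⟩ := h
  have hsh : ∀ (x : P3), x ∉ S0 → ∀ a b : Fin r, a ≠ b →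
      x ∈ (T a).verts → x ∈ (T b).verts → False := by
    intro x hx a b hab h1 h2
    exact hx (hint a b hab ▸ (⟨h1, h2⟩ : x ∈ (T a).verts ∩ (T b).verts))
  have hpt2 : pt2 ∉ S0 := by rw [mem_S0_iff]; push_neg; exact ⟨by decide, by decide, by decide⟩
  have hpt3 : pt3 ∉ S0 := by rw [mem_S0_iff]; push_neg; exact ⟨by decide, by decide, by decide⟩
  have hmem : ∀ a : Fin r, pe0 ∈ (T a).verts ∧ pe1 ∈ (T a).verts ∧ pt1 ∈ (T a).verts :=
    fun a => ⟨hsub a (mem_S0_iff.mpr (Or.inl rfl)), hsub a (mem_S0_iff.mpr (Or.inr (Or.inl rfl))),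
      hsub a (mem_S0_iff.mpr (Or.inr (Or.inr rfl)))⟩
  have core : ∀ i j k : Fin r, i ≠ j → i ≠ k → j ≠ k →
      pt2 ∉ (T i).verts → pt3 ∉ (T i).verts → False := by
    intro i j k hij hik hjk h2 h3
    have hverts : ∀ u ∈ (T i).verts, u = pe0 ∨ u = pe1 ∨ u = pe2 ∨ u = pt1 := by
      intro u hu
      rcases dec6 u with rfl | rfl | rfl | rfl | rfl | rfl
      · exact Or.inl rfl
      · exact Or.inr (Or.inl rfl)
      · exact Or.inr (Or.inr (Or.inl rfl))
      · exact Or.inr (Or.inr (Or.inr rfl))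
      · exact absurd hu h2
      · exact absurd hu h3
    have hadj1 : ∀ u z, (T i).Adj u z → u = pt1 ∨ z = pt1 := by
      intro u z huz
      have hu := hverts u huz.fst_mem
      have hzv := hverts z huz.snd_mem
      have hG := adj_iff.mp ((T i).adj_sub huz)
      rcases hu with rfl | rfl | rfl | rfl <;> rcases hzv with rfl | rfl | rfl | rfl <;>
        first
          | exact Or.inl rfl
          | exact Or.inr rfl
          | exact absurd (by decide) hG
    obtain ⟨z0, hz0⟩ := exists_adj_of_mem ⟨(htree i).isConnected⟩
      (hmem i).1 (hmem i).2.2 (by decide)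
    have hz0' : z0 = pt1 := by
      rcases hadj1 _ _ hz0 with h | h
      · exact absurd h (by decide)
      · exact h
    have edge1 : s(pe0, pt1) ∈ (T i).edgeSet := Subgraph.mem_edgeSet.mpr (hz0' ▸ hz0)
    obtain ⟨z1, hz1⟩ := exists_adj_of_mem ⟨(htree i).isConnected⟩
      (hmem i).2.1 (hmem i).2.2 (by decide)
    have hz1' : z1 = pt1 := by
      rcases hadj1 _ _ hz1 with h | h
      · exact absurd h (by decide)
      · exact h
    have edge2 : s(pe1, pt1) ∈ (T i).edgeSet := Subgraph.mem_edgeSet.mpr (hz1' ▸ hz1)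
    have hnbr : ∀ a : Fin r, a ≠ i → s(pt1, pe2) ∈ (T a).edgeSet := by
      intro a hai
      obtain ⟨z, hz⟩ := exists_adj_of_mem ⟨(htree a).isConnected⟩
        (hmem a).2.2 (hmem a).1 (by decide)
      have hG := adj_iff.mp ((T a).adj_sub hz)
      have hzsign : Perm.sign z = 1 := by
        rcases Int.units_eq_one_or (Perm.sign z) with h | h
        · exact h
        · exact absurd (by rw [h]; decide) hG.symm
      have hz3 : z = pe0 ∨ z = pe1 ∨ z = pe2 := by
        rcases dec6 z with rfl | rfl | rfl | rfl | rfl | rfl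
        · exact Or.inl rfl
        · exact Or.inr (Or.inl rfl)
        · exact Or.inr (Or.inr rfl)
        · exact absurd hzsign (by decide)
        · exact absurd hzsign (by decide)
        · exact absurd hzsign (by decide)
      rcases hz3 with rfl | rfl | rfl
      · exact absurd (Sym2.eq_swap ▸ edge1)
          (fun hmm => Set.disjoint_left.mp (hdisj a i hai) (Subgraph.mem_edgeSet.mpr hz) hmm)
      · exact absurd (Sym2.eq_swap ▸ edge2)
          (fun hmm => Set.disjoint_left.mp (hdisj a i hai) (Subgraph.mem_edgeSet.mpr hz) hmm)
      · exact Subgraph.mem_edgeSet.mpr hz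
    exact Set.disjoint_left.mp (hdisj j k hjk) (hnbr j (Ne.symm hij)) (hnbr k (Ne.symm hik))
  let i0 : Fin r := ⟨0, by omega⟩
  let i1 : Fin r := ⟨1, by omega⟩
  let i2 : Fin r := ⟨2, by omega⟩
  have h01 : i0 ≠ i1 := Fin.ne_of_val_ne (by norm_num)
  have h02 : i0 ≠ i2 := Fin.ne_of_val_ne (by norm_num)
  have h12 : i1 ≠ i2 := Fin.ne_of_val_ne (by norm_num)
  by_cases h20 : pt2 ∈ (T i0).verts
  · have h21 : pt2 ∉ (T i1).verts := fun h => hsh pt2 hpt2 i0 i1 h01 h20 h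
    have h22 : pt2 ∉ (T i2).verts := fun h => hsh pt2 hpt2 i0 i2 h02 h20 h
    by_cases h31 : pt3 ∈ (T i1).verts
    · have h32 : pt3 ∉ (T i2).verts := fun h => hsh pt3 hpt3 i1 i2 h12 h31 h
      exact core i2 i0 i1 (Ne.symm h02) (Ne.symm h12) h01 h22 h32
    · exact core i1 i0 i2 (Ne.symm h01) h12 h02 h21 h31
  · by_cases h30 : pt3 ∈ (T i0).verts
    · have h31 : pt3 ∉ (T i1).verts := fun h => hsh pt3 hpt3 i0 i1 h01 h30 h
      by_cases h21 : pt2 ∈ (T i1).verts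
      · have h22 : pt2 ∉ (T i2).verts := fun h => hsh pt2 hpt2 i1 i2 h12 h21 h
        have h32 : pt3 ∉ (T i2).verts := fun h => hsh pt3 hpt3 i0 i2 h02 h30 h
        exact core i2 i0 i1 (Ne.symm h02) (Ne.symm h12) h01 h22 h32
      · exact core i1 i0 i2 (Ne.symm h01) h12 h02 h21 h31
    · exact core i0 i1 i2 h01 h02 h12 h20 h30

lemma connectsSet_bdd {S : Set P3} (hS : S.ncard = 3) :
    BddAbove {r | ConnectsSet BS3 S r} := by
  obtain ⟨x, y, z, hxy, hxz, hyz, rfl⟩ := Set.ncard_eq_three.mp hS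
  refine ⟨Fintype.card (Sym2 P3), ?_⟩
  rintro r ⟨T, htree, hsub, hint, hdisj⟩
  have hx : x ∈ ({x, y, z} : Set P3) := Or.inl rfl
  have hy : y ∈ ({x, y, z} : Set P3) := Or.inr (Or.inl rfl)
  choose f hf using fun i : Fin r =>
    exists_adj_of_mem ⟨(htree i).isConnected⟩ (hsub i hx) (hsub i hy) hxy
  have hinj : Function.Injective (fun i : Fin r => s(x, f i)) := by
    intro i j hij'
    by_contra hne
    have h1 : s(x, f i) ∈ (T i).edgeSet := Subgraph.mem_edgeSet.mpr (hf i)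
    have h2 : s(x, f i) ∈ (T j).edgeSet := by
      rw [show s(x, f i) = s(x, f j) from hij']
      exact Subgraph.mem_edgeSet.mpr (hf j)
    exact Set.disjoint_left.mp (hdisj i j hne) h1 h2
  simpa using Fintype.card_le_of_injective _ hinj

lemma treeConn_S0 : treeConn BS3 S0 = 2 := by
  have h2 : ConnectsSet BS3 S0 2 := lower_bound S0_ncard
  refine le_antisymm (csSup_le ⟨2, h2⟩ fun r hr => upper_bound hr) ?_
  exact le_csSup ⟨2, fun r hr => upper_bound hr⟩ h2

end BS3sec

/-- `κ₃(BS_3) = 2`. -/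
theorem stmt_17 : kappa3 (bubbleSortStar 3 (le_refl 3)) = 2 := by
  refine le_antisymm (Nat.sInf_le ⟨S0, S0_ncard, treeConn_S0⟩) ?_
  refine le_csInf ⟨2, S0, S0_ncard, treeConn_S0⟩ ?_
  rintro k ⟨S, hS3, rfl⟩
  exact le_csSup (connectsSet_bdd hS3) (lower_bound hS3)
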